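/- Define a_k and ε_k as above, and let λ_k¹ = (a_k + a_{k+2} - √((a_k - a_{k+2})² + 4ε_k²))/2 be the smaller eigenvalue of A_k = [[a_k, ε_k],[ε_k, a_{k+2}]]. Then for every integer k ≥ 1, λ_k¹ > 1/50. -/
import Mathlib


noncomputable def d (k : ℕ) : ℝ := ((k : ℝ) - 2) ^ 2 * ((k : ℝ) + 2) / (4 * (k : ℝ) ^ 2)

noncomputable def a (k : ℕ) : ℝ := (d k - d (k + 2)) ^ 2

noncomputable def eps (k : ℕ) : ℝ :=
  -2 * d (k + 2) ^ 2 + d k * d (k + 2) + d (k + 2) * d (k + 4)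


lemma keyA (x : ℝ) (hx : (2 : ℝ) ≤ x) :
    |(-2 * (x ^ 2 * (x + 4) / (4 * (x + 2) ^ 2)) ^ 2 + (x - 2) ^ 2 * (x + 2) / (4 * x ^ 2) * (x ^ 2 * (x + 4) / (4 * (x + 2) ^ 2)) + x ^ 2 * (x + 4) / (4 * (x + 2) ^ 2) * ((x + 2) ^ 2 * (x + 6) / (4 * (x + 4) ^ 2)))| < ((x - 2) ^ 2 * (x + 2) / (4 * x ^ 2) - x ^ 2 * (x + 4) / (4 * (x + 2) ^ 2)) ^ 2 - 1 / 50 := by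
  have hx0 : (0 : ℝ) < x := by linarith
  have h2 : (0 : ℝ) < x + 2 := by linarith
  have h4 : (0 : ℝ) < x + 4 := by linarith
  have hx0' : x ≠ 0 := ne_of_gt hx0
  have h2' : x + 2 ≠ 0 := ne_of_gt h2
  have h4' : x + 4 ≠ 0 := ne_of_gt h4
  have hy : (0 : ℝ) ≤ x - 2 := by linarith
  have hD : (0 : ℝ) < (51200 * x ^ 4 * (x + 2) ^ 4 * (x + 4) ^ 2) := by positivity
  rw [abs_lt]
  constructor
  · have key : ((x - 2) ^ 2 * (x + 2) / (4 * x ^ 2) - x ^ 2 * (x + 4) / (4 * (x + 2) ^ 2)) ^ 2 + (-2 * (x ^ 2 * (x + 4) / (4 * (x + 2) ^ 2)) ^ 2 + (x - 2) ^ 2 * (x + 2) / (4 * x ^ 2) * (x ^ 2 * (x + 4) / (4 * (x + 2) ^ 2)) + x ^ 2 * (x + 4) / (4 * (x + 2) ^ 2) * ((x + 2) ^ 2 * (x + 6) / (4 * (x + 4) ^ 2))) - 1 / 50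
        = (1303904256 + 5342494720 * (x - 2) + 9031122944 * (x - 2) ^ 2 + 8110211072 * (x - 2) ^ 3 + 4423057408 * (x - 2) ^ 4 + 1578401792 * (x - 2) ^ 5 + 382009344 * (x - 2) ^ 6 + 62791680 * (x - 2) ^ 7 + 6735872 * (x - 2) ^ 8 + 423936 * (x - 2) ^ 9 + 11776 * (x - 2) ^ 10) / (51200 * x ^ 4 * (x + 2) ^ 4 * (x + 4) ^ 2) := by
      field_simp
      ring
    have hP : (0 : ℝ) < 1303904256 + 5342494720 * (x - 2) + 9031122944 * (x - 2) ^ 2 + 8110211072 * (x - 2) ^ 3 + 4423057408 * (x - 2) ^ 4 + 1578401792 * (x - 2) ^ 5 + 382009344 * (x - 2) ^ 6 + 62791680 * (x - 2) ^ 7 + 6735872 * (x - 2) ^ 8 + 423936 * (x - 2) ^ 9 + 11776 * (x - 2) ^ 10 := by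
      nlinarith [pow_nonneg hy 2, pow_nonneg hy 3, pow_nonneg hy 4, pow_nonneg hy 5, pow_nonneg hy 6, pow_nonneg hy 7, pow_nonneg hy 8, pow_nonneg hy 9, pow_nonneg hy 10]
    have := div_pos hP hD
    rw [← key] at this
    linarith
  · have key : ((x - 2) ^ 2 * (x + 2) / (4 * x ^ 2) - x ^ 2 * (x + 4) / (4 * (x + 2) ^ 2)) ^ 2 - (-2 * (x ^ 2 * (x + 4) / (4 * (x + 2) ^ 2)) ^ 2 + (x - 2) ^ 2 * (x + 2) / (4 * x ^ 2) * (x ^ 2 * (x + 4) / (4 * (x + 2) ^ 2)) + x ^ 2 * (x + 4) / (4 * (x + 2) ^ 2) * ((x + 2) ^ 2 * (x + 6) / (4 * (x + 4) ^ 2))) - 1 / 50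
        = (517472256 + 3559915520 * (x - 2) + 7536902144 * (x - 2) ^ 2 + 7651459072 * (x - 2) ^ 3 + 4508254208 * (x - 2) ^ 4 + 1683259392 * (x - 2) ^ 5 + 413138944 * (x - 2) ^ 6 + 66887680 * (x - 2) ^ 7 + 6940672 * (x - 2) ^ 8 + 423936 * (x - 2) ^ 9 + 11776 * (x - 2) ^ 10) / (51200 * x ^ 4 * (x + 2) ^ 4 * (x + 4) ^ 2) := by
      field_simp
      ring
    have hP : (0 : ℝ) < 517472256 + 3559915520 * (x - 2) + 7536902144 * (x - 2) ^ 2 + 7651459072 * (x - 2) ^ 3 + 4508254208 * (x - 2) ^ 4 + 1683259392 * (x - 2) ^ 5 + 413138944 * (x - 2) ^ 6 + 66887680 * (x - 2) ^ 7 + 6940672 * (x - 2) ^ 8 + 423936 * (x - 2) ^ 9 + 11776 * (x - 2) ^ 10 := by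
      nlinarith [pow_nonneg hy 2, pow_nonneg hy 3, pow_nonneg hy 4, pow_nonneg hy 5, pow_nonneg hy 6, pow_nonneg hy 7, pow_nonneg hy 8, pow_nonneg hy 9, pow_nonneg hy 10]
    have := div_pos hP hD
    rw [← key] at this
    linarith

lemma keyB (x : ℝ) (hx : (1 : ℝ) ≤ x) :
    |(-2 * (x ^ 2 * (x + 4) / (4 * (x + 2) ^ 2)) ^ 2 + (x - 2) ^ 2 * (x + 2) / (4 * x ^ 2) * (x ^ 2 * (x + 4) / (4 * (x + 2) ^ 2)) + x ^ 2 * (x + 4) / (4 * (x + 2) ^ 2) * ((x + 2) ^ 2 * (x + 6) / (4 * (x + 4) ^ 2)))| < (x ^ 2 * (x + 4) / (4 * (x + 2) ^ 2) - (x + 2) ^ 2 * (x + 6) / (4 * (x + 4) ^ 2)) ^ 2 - 1 / 50 := by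
  have hx0 : (0 : ℝ) < x := by linarith
  have h2 : (0 : ℝ) < x + 2 := by linarith
  have h4 : (0 : ℝ) < x + 4 := by linarith
  have hx0' : x ≠ 0 := ne_of_gt hx0
  have h2' : x + 2 ≠ 0 := ne_of_gt h2
  have h4' : x + 4 ≠ 0 := ne_of_gt h4
  have hy : (0 : ℝ) ≤ x - 1 := by linarith
  have hD : (0 : ℝ) < (51200 * x ^ 2 * (x + 2) ^ 4 * (x + 4) ^ 4) := by positivity
  rw [abs_lt]
  constructor
  · have key : (x ^ 2 * (x + 4) / (4 * (x + 2) ^ 2) - (x + 2) ^ 2 * (x + 6) / (4 * (x + 4) ^ 2)) ^ 2 + (-2 * (x ^ 2 * (x + 4) / (4 * (x + 2) ^ 2)) ^ 2 + (x - 2) ^ 2 * (x + 2) / (4 * x ^ 2) * (x ^ 2 * (x + 4) / (4 * (x + 2) ^ 2)) + x ^ 2 * (x + 4) / (4 * (x + 2) ^ 2) * ((x + 2) ^ 2 * (x + 6) / (4 * (x + 4) ^ 2))) - 1 / 50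
        = (970124800 + 3682483200 * (x - 1) + 5854656000 * (x - 1) ^ 2 + 5208862720 * (x - 1) ^ 3 + 2938182656 * (x - 1) ^ 4 + 1118013440 * (x - 1) ^ 5 + 292903936 * (x - 1) ^ 6 + 52113408 * (x - 1) ^ 7 + 5993984 * (x - 1) ^ 8 + 400384 * (x - 1) ^ 9 + 11776 * (x - 1) ^ 10) / (51200 * x ^ 2 * (x + 2) ^ 4 * (x + 4) ^ 4) := by
      field_simp
      ring
    have hP : (0 : ℝ) < 970124800 + 3682483200 * (x - 1) + 5854656000 * (x - 1) ^ 2 + 5208862720 * (x - 1) ^ 3 + 2938182656 * (x - 1) ^ 4 + 1118013440 * (x - 1) ^ 5 + 292903936 * (x - 1) ^ 6 + 52113408 * (x - 1) ^ 7 + 5993984 * (x - 1) ^ 8 + 400384 * (x - 1) ^ 9 + 11776 * (x - 1) ^ 10 := by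
      nlinarith [pow_nonneg hy 2, pow_nonneg hy 3, pow_nonneg hy 4, pow_nonneg hy 5, pow_nonneg hy 6, pow_nonneg hy 7, pow_nonneg hy 8, pow_nonneg hy 9, pow_nonneg hy 10]
    have := div_pos hP hD
    rw [← key] at this
    linarith
  · have key : (x ^ 2 * (x + 4) / (4 * (x + 2) ^ 2) - (x + 2) ^ 2 * (x + 6) / (4 * (x + 4) ^ 2)) ^ 2 - (-2 * (x ^ 2 * (x + 4) / (4 * (x + 2) ^ 2)) ^ 2 + (x - 2) ^ 2 * (x + 2) / (4 * x ^ 2) * (x ^ 2 * (x + 4) / (4 * (x + 2) ^ 2)) + x ^ 2 * (x + 4) / (4 * (x + 2) ^ 2) * ((x + 2) ^ 2 * (x + 6) / (4 * (x + 4) ^ 2))) - 1 / 50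
        = (176524800 + 1286323200 * (x - 1) + 3225024000 * (x - 1) ^ 2 + 3989073920 * (x - 1) ^ 3 + 2792774656 * (x - 1) ^ 4 + 1190922240 * (x - 1) ^ 5 + 322395136 * (x - 1) ^ 6 + 56209408 * (x - 1) ^ 7 + 6198784 * (x - 1) ^ 8 + 400384 * (x - 1) ^ 9 + 11776 * (x - 1) ^ 10) / (51200 * x ^ 2 * (x + 2) ^ 4 * (x + 4) ^ 4) := by
      field_simp
      ring
    have hP : (0 : ℝ) < 176524800 + 1286323200 * (x - 1) + 3225024000 * (x - 1) ^ 2 + 3989073920 * (x - 1) ^ 3 + 2792774656 * (x - 1) ^ 4 + 1190922240 * (x - 1) ^ 5 + 322395136 * (x - 1) ^ 6 + 56209408 * (x - 1) ^ 7 + 6198784 * (x - 1) ^ 8 + 400384 * (x - 1) ^ 9 + 11776 * (x - 1) ^ 10 := by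
      nlinarith [pow_nonneg hy 2, pow_nonneg hy 3, pow_nonneg hy 4, pow_nonneg hy 5, pow_nonneg hy 6, pow_nonneg hy 7, pow_nonneg hy 8, pow_nonneg hy 9, pow_nonneg hy 10]
    have := div_pos hP hD
    rw [← key] at this
    linarith

lemma hb_nat (k : ℕ) (hk : 1 ≤ k) : 1 / 50 + |eps k| < a k := by
  rcases Nat.lt_or_ge k 2 with h | h
  · have hk1 : k = 1 := by omega
    subst hk1
    have he : eps 1 = 62 / 405 := by
      unfold eps d; norm_num
    have ha : a 1 = 121 / 324 := by
      unfold a d; norm_num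
    rw [he, ha, abs_of_pos (by norm_num : (0:ℝ) < 62 / 405)]
    norm_num
  · have hx : (2 : ℝ) ≤ (k : ℝ) := by exact_mod_cast h
    have h1 : a k = ((((k : ℝ)) - 2) ^ 2 * (((k : ℝ)) + 2) / (4 * ((k : ℝ)) ^ 2) - ((k : ℝ)) ^ 2 * (((k : ℝ)) + 4) / (4 * (((k : ℝ)) + 2) ^ 2)) ^ 2 := by
      unfold a d; push_cast; ring
    have h2 : eps k = (-2 * (((k : ℝ)) ^ 2 * (((k : ℝ)) + 4) / (4 * (((k : ℝ)) + 2) ^ 2)) ^ 2 + (((k : ℝ)) - 2) ^ 2 * (((k : ℝ)) + 2) / (4 * ((k : ℝ)) ^ 2) * (((k : ℝ)) ^ 2 * (((k : ℝ)) + 4) / (4 * (((k : ℝ)) + 2) ^ 2)) + ((k : ℝ)) ^ 2 * (((k : ℝ)) + 4) / (4 * (((k : ℝ)) + 2) ^ 2) * ((((k : ℝ)) + 2) ^ 2 * (((k : ℝ)) + 6) / (4 * (((k : ℝ)) + 4) ^ 2))) := by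
      unfold eps d; push_cast; ring
    have := keyA (k : ℝ) hx
    rw [h1, h2]
    linarith

lemma hc_nat (k : ℕ) (hk : 1 ≤ k) : 1 / 50 + |eps k| < a (k + 2) := by
  have hx : (1 : ℝ) ≤ (k : ℝ) := by exact_mod_cast hk
  have h1 : a (k + 2) = ((((k : ℝ)) ^ 2 * (((k : ℝ)) + 4) / (4 * (((k : ℝ)) + 2) ^ 2) - (((k : ℝ)) + 2) ^ 2 * (((k : ℝ)) + 6) / (4 * (((k : ℝ)) + 4) ^ 2)) ^ 2) := by
    unfold a d; push_cast; ring
  have h2 : eps k = (-2 * (((k : ℝ)) ^ 2 * (((k : ℝ)) + 4) / (4 * (((k : ℝ)) + 2) ^ 2)) ^ 2 + (((k : ℝ)) - 2) ^ 2 * (((k : ℝ)) + 2) / (4 * ((k : ℝ)) ^ 2) * (((k : ℝ)) ^ 2 * (((k : ℝ)) + 4) / (4 * (((k : ℝ)) + 2) ^ 2)) + ((k : ℝ)) ^ 2 * (((k : ℝ)) + 4) / (4 * (((k : ℝ)) + 2) ^ 2) * ((((k : ℝ)) + 2) ^ 2 * (((k : ℝ)) + 6) / (4 * (((k : ℝ))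 + 4) ^ 2))) := by
    unfold eps d; push_cast; ring
  have := keyB (k : ℝ) hx
  rw [h1, h2]
  linarith

theorem lambda1_lower_bound (k : ℕ) (hk : 1 ≤ k) :
    1 / 50 <
      (a k + a (k + 2) - Real.sqrt ((a k - a (k + 2)) ^ 2 + 4 * eps k ^ 2)) / 2 := by
  have hb := hb_nat k hk
  have hc := hc_nat k hk
  set b := a k
  set c := a (k + 2)
  set e := eps k
  have habs : Real.sqrt ((b - c) ^ 2 + 4 * e ^ 2) ≤ |b - c| + 2 * |e| := by
    have hle : (b - c) ^ 2 + 4 * e ^ 2 ≤ (|b - c| + 2 * |e|) ^ 2 := by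
      nlinarith [sq_abs (b - c), sq_abs e, mul_nonneg (abs_nonneg (b - c)) (abs_nonneg e)]
    calc Real.sqrt ((b - c) ^ 2 + 4 * e ^ 2) ≤ Real.sqrt ((|b - c| + 2 * |e|) ^ 2) :=
          Real.sqrt_le_sqrt hle
      _ = |b - c| + 2 * |e| := Real.sqrt_sq (by positivity)
  rcases abs_cases (b - c) with ⟨h1, _⟩ | ⟨h1, _⟩ <;> linarith
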